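/- arXiv:1309.2685 — 3 statements merged into one kernel-verified Lean document; each statement's English description precedes it below -/
import Mathlib

section
/- Let P be a finite poset with realizer {Λ₁, Λ₂}, Q the complementary poset, and v the valuation on the downset lattice L of P given by weights w(x) = number of chains in Q with maximum element x. Then v is complete: for every initial segment T of L (subset whose v-image is {0,…,j-1}), the set of all joins (unions) of subsets of T is an initial segment, and for every final segment of L the set of all meets (intersections) is a final segment. -/
open Finset

variable (P : Type*) [PartialOrder P] [Fintype P] [DecidableEq P]

/-- The lattice of downsets (lower sets) of a finite poset `P`. -/
def DownSet : Type _ := {A : Finset P // IsLowerSet (↑A : Set P)}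

variable {P}

instance : Lattice (DownSet P) :=
  Subtype.lattice (fun _ _ hA hB => by simpa [Finset.sup_eq_union] using hA.union hB)
    (fun _ _ hA hB => by simpa [Finset.inf_eq_inter] using hA.inter hB)

instance : OrderBot (DownSet P) :=
  Subtype.orderBot (by simp [Finset.bot_eq_empty, isLowerSet_empty])

noncomputable instance : Fintype (DownSet P) :=
  Fintype.ofInjective Subtype.val Subtype.val_injective

/-- The valuation associated to a weight function `w`. -/
def vval (w : P → ℕ) (A : DownSet P) : ℕ := ∑ x ∈ A.1, w x

variable [DecidableRel ((· ≤ ·) : P → P → Prop)]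

/-- The principal downset of `y`. -/
def pd (y : P) : DownSet P :=
  ⟨univ.filter (· ≤ y), by
    intro a b hba ha
    simp only [coe_filter, Set.mem_setOf_eq, mem_univ, true_and] at *
    exact hba.trans ha⟩

/-- The dual valuation evaluated on the principal upset of `x`. -/
def vup (w : P → ℕ) (x : P) : ℕ := ∑ z ∈ univ.filter (fun z => x ≤ z), w z

/-- `T` is an initial segment for the valuation `v`. -/
def Initial (v : DownSet P → ℕ) (T : Set (DownSet P)) : Prop :=
  ∃ j, v '' T = {k | k < j}

/-- `T` is a final segment for the valuation `v`. -/
def Final (v : DownSet P → ℕ) (T : Set (DownSet P)) : Prop :=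
  ∃ j, v '' T = {k | j ≤ k ∧ k < Fintype.card (DownSet P)}

/-- The set of arbitrary (nonempty) joins of elements of `T`. -/
def joinSet (T : Set (DownSet P)) : Set (DownSet P) :=
  {a | ∃ S : Finset (DownSet P), ↑S ⊆ T ∧ ∃ hS : S.Nonempty, a = S.sup' hS id}

/-- The set of arbitrary (nonempty) meets of elements of `T`. -/
def meetSet (T : Set (DownSet P)) : Set (DownSet P) :=
  {a | ∃ S : Finset (DownSet P), ↑S ⊆ T ∧ ∃ hS : S.Nonempty, a = S.inf' hS id}

/-- A complete valuation: bijective onto `{0,…,|L|-1}`, join-closures of initial segments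
are initial segments, meet-closures of final segments are final segments. -/
def IsCompleteValuation (w : P → ℕ) : Prop :=
  Set.BijOn (vval w) Set.univ {k | k < Fintype.card (DownSet P)} ∧
  (∀ T, Initial (vval w) T → Initial (vval w) (joinSet T)) ∧
  (∀ T, Final (vval w) T → Final (vval w) (meetSet T))

/-- The complementary order from two linear orders: `x ≤' y` iff `le1 x y` and `le2 y x`. -/
def le'' (le1 le2 : P → P → Prop) (x y : P) : Prop := le1 x y ∧ le2 y x

/-- The number of chains (under the complementary order) with maximum element `y`. -/
noncomputable def chainCount (le1 le2 : P → P → Prop) (y : P) : ℕ :=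
  Set.ncard {C : Finset P | y ∈ C ∧ (∀ a ∈ C, le'' le1 le2 a y) ∧
    ∀ a ∈ C, ∀ b ∈ C, le'' le1 le2 a b ∨ le'' le1 le2 b a}

/-- `{le1, le2}` is a realizer of `P`. -/
def IsRealizer (le1 le2 : P → P → Prop) : Prop :=
  IsLinearOrder P le1 ∧ IsLinearOrder P le2 ∧ ∀ x y : P, x ≤ y ↔ le1 x y ∧ le2 x y

section AuxDev
set_option linter.unusedSectionVars false
set_option linter.unusedVariables false
open scoped Classical

variable {r : P → P → Prop}

/-- position of `x` in the linear order `r`. -/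
noncomputable def idx (r : P → P → Prop) (x : P) : ℕ := (univ.filter (fun y => r y x)).card

variable {r : P → P → Prop}

lemma idx_le (hL : IsLinearOrder P r) {x y : P} (hxy : r x y) : idx r x ≤ idx r y := by
  haveI := hL
  apply card_le_card
  intro z hz
  simp only [mem_filter, mem_univ, true_and] at *
  exact _root_.trans_of r hz hxy

lemma idx_lt (hL : IsLinearOrder P r) {x y : P} (hxy : r x y) (hne : x ≠ y) :
    idx r x < idx r y := by
  haveI := hL
  apply card_lt_card
  constructor
  · intro z hz
    simp only [mem_filter, mem_univ, true_and] at *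
    exact _root_.trans_of r hz hxy
  · intro hsub
    have hy : y ∈ univ.filter (fun z => r z y) := by
      simp only [mem_filter, mem_univ, true_and]
      exact _root_.refl_of r y
    have := hsub hy
    simp only [mem_filter, mem_univ, true_and] at this
    exact hne (antisymm_of r hxy this)

lemma idx_rev (hL : IsLinearOrder P r) {x y : P} (hxy : idx r x < idx r y) :
    r x y ∧ x ≠ y := by
  haveI := hL
  rcases total_of r x y with hr | hr
  · refine ⟨hr, ?_⟩
    rintro rfl; exact lt_irrefl _ hxy
  · exfalso
    exact absurd (idx_le hL hr) (by omega)

lemma idx_inj (hL : IsLinearOrder P r) {x y : P} (hxy : idx r x = idx r y) : x = y := by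
  haveI := hL
  by_contra hne
  rcases total_of r x y with hr | hr
  · exact absurd (idx_lt hL hr hne) (by omega)
  · exact absurd (idx_lt hL hr (Ne.symm hne)) (by omega)

/-- binary encoding of a finset by positions in `r`. -/
noncomputable def NN (r : P → P → Prop) (A : Finset P) : ℕ := ∑ x ∈ A, 2 ^ (idx r x)

lemma NN_mono {A B : Finset P} (hAB : A ⊆ B) : NN r A ≤ NN r B :=
  Finset.sum_le_sum_of_subset hAB

lemma sum_range_two_pow (m : ℕ) : ∑ i ∈ Finset.range m, 2 ^ i = 2 ^ m - 1 := by
  induction m with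
  | zero => simp
  | succ n ih =>
      rw [Finset.sum_range_succ, ih]
      have : 1 ≤ 2 ^ n := Nat.one_le_two_pow
      have h2 : (2:ℕ) ^ (n+1) = 2 ^ n + 2 ^ n := by ring
      omega

lemma NN_lt_pow (hL : IsLinearOrder P r) {A : Finset P} {m : ℕ}
    (hA : ∀ y ∈ A, idx r y < m) : NN r A < 2 ^ m := by
  have hinj : ∀ x ∈ A, ∀ y ∈ A, idx r x = idx r y → x = y := fun x _ y _ hxy => idx_inj hL hxy
  have h1 : NN r A = ∑ i ∈ A.image (idx r), 2 ^ i := (Finset.sum_image hinj).symm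
  rw [h1]
  have hsub : A.image (idx r) ⊆ Finset.range m := by
    intro i hi
    simp only [mem_image] at hi
    obtain ⟨x, hx, rfl⟩ := hi
    exact Finset.mem_range.mpr (hA x hx)
  calc ∑ i ∈ A.image (idx r), 2 ^ i ≤ ∑ i ∈ Finset.range m, 2 ^ i :=
        Finset.sum_le_sum_of_subset hsub
    _ = 2 ^ m - 1 := sum_range_two_pow m
    _ < 2 ^ m := by have : 1 ≤ (2:ℕ) ^ m := Nat.one_le_two_pow; omega

/-- The bridge lemma: if `z ∈ B \ A` and `A`, `B` agree strictly above `z`, then `NN A < NN B`. -/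
lemma NN_bridge (hL : IsLinearOrder P r) {A B : Finset P} {z : P} (hzB : z ∈ B) (hzA : z ∉ A)
    (hag : ∀ y, idx r z < idx r y → (y ∈ A ↔ y ∈ B)) : NN r A < NN r B := by
  classical
  have hsplitA := Finset.sum_filter_add_sum_filter_not A (fun y => idx r z < idx r y)
    (fun x => 2 ^ (idx r x))
  have hsplitB := Finset.sum_filter_add_sum_filter_not B (fun y => idx r z < idx r y)
    (fun x => 2 ^ (idx r x))
  have hhigh : A.filter (fun y => idx r z < idx r y) = B.filter (fun y => idx r z < idx r y) := by
    ext y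
    simp only [mem_filter]
    constructor
    · rintro ⟨hy, hlt⟩; exact ⟨(hag y hlt).1 hy, hlt⟩
    · rintro ⟨hy, hlt⟩; exact ⟨(hag y hlt).2 hy, hlt⟩
  have hlowA : ∑ x ∈ A.filter (fun y => ¬ idx r z < idx r y), 2 ^ (idx r x) < 2 ^ (idx r z) := by
    apply NN_lt_pow hL
    intro y hy
    simp only [mem_filter, not_lt] at hy
    have hne : y ≠ z := by rintro rfl; exact hzA hy.1
    have := hy.2
    rcases Nat.lt_or_ge (idx r y) (idx r z) with h | h
    · exact h
    · exact absurd (idx_inj hL (Nat.le_antisymm this h)) hne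
  have hlowB : 2 ^ (idx r z) ≤ ∑ x ∈ B.filter (fun y => ¬ idx r z < idx r y), 2 ^ (idx r x) := by
    apply Finset.single_le_sum (f := fun x => (2:ℕ) ^ (idx r x)) (fun i _ => Nat.zero_le _)
    simp only [mem_filter, not_lt]
    exact ⟨hzB, le_refl _⟩
  have e1 : ∑ x ∈ B.filter (fun y => idx r z < idx r y), 2 ^ (idx r x)
      + ∑ x ∈ A.filter (fun y => ¬ idx r z < idx r y), 2 ^ (idx r x) = NN r A := by
    rw [← hhigh]; exact hsplitA
  have e2 : ∑ x ∈ B.filter (fun y => idx r z < idx r y), 2 ^ (idx r x)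
      + ∑ x ∈ B.filter (fun y => ¬ idx r z < idx r y), 2 ^ (idx r x) = NN r B := hsplitB
  omega

/-- Key packaging: for distinct finsets, the `r`-largest element of the symmetric
difference determines the `NN`-comparison. -/
lemma NN_key (hL : IsLinearOrder P r) {A B : Finset P} (hne : A ≠ B) :
    ∃ z, ((z ∈ A ∧ z ∉ B ∧ NN r B < NN r A) ∨ (z ∈ B ∧ z ∉ A ∧ NN r A < NN r B)) ∧
      ∀ y, ((y ∈ A ∧ y ∉ B) ∨ (y ∈ B ∧ y ∉ A)) → idx r y ≤ idx r z := by
  classical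
  set Δ := (A \ B) ∪ (B \ A) with hΔ
  have hΔne : Δ.Nonempty := by
    rw [Finset.nonempty_iff_ne_empty]
    intro hemp
    apply hne
    ext x
    constructor
    · intro hx
      by_contra hxB
      have : x ∈ Δ := by simp [hΔ, hx, hxB]
      rw [hemp] at this; exact absurd this (Finset.notMem_empty x)
    · intro hx
      by_contra hxA
      have : x ∈ Δ := by simp [hΔ, hx, hxA]
      rw [hemp] at this; exact absurd this (Finset.notMem_empty x)
  obtain ⟨z, hzΔ, hzmax⟩ := Finset.exists_max_image Δ (idx r) hΔne
  have hmax' : ∀ y, ((y ∈ A ∧ y ∉ B) ∨ (y ∈ B ∧ y ∉ A)) → idx r y ≤ idx r z := by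
    intro y hy
    apply hzmax
    rcases hy with ⟨h1, h2⟩ | ⟨h1, h2⟩ <;> simp [hΔ, h1, h2]
  simp only [hΔ, Finset.mem_union, Finset.mem_sdiff] at hzΔ
  rcases hzΔ with ⟨hzA, hzB⟩ | ⟨hzB, hzA⟩
  · refine ⟨z, Or.inl ⟨hzA, hzB, ?_⟩, hmax'⟩
    apply NN_bridge hL hzA hzB
    intro y hy
    by_contra hiff
    have hyΔ : y ∈ Δ := by
      simp only [hΔ, Finset.mem_union, Finset.mem_sdiff]
      by_cases hyA : y ∈ A <;> by_cases hyB : y ∈ B <;> simp_all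
    exact absurd (hzmax y hyΔ) (by omega)
  · refine ⟨z, Or.inr ⟨hzB, hzA, ?_⟩, hmax'⟩
    apply NN_bridge hL hzB hzA
    intro y hy
    by_contra hiff
    have hyΔ : y ∈ Δ := by
      simp only [hΔ, Finset.mem_union, Finset.mem_sdiff]
      by_cases hyA : y ∈ A <;> by_cases hyB : y ∈ B <;> simp_all
    exact absurd (hzmax y hyΔ) (by omega)

lemma NN_ne (hL : IsLinearOrder P r) {A B : Finset P} (hne : A ≠ B) : NN r A ≠ NN r B := by
  obtain ⟨z, hz, -⟩ := NN_key hL hne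
  rcases hz with ⟨-, -, h⟩ | ⟨-, -, h⟩ <;> omega


/-- `A` is a downset of `P` relative to the ground set `s`. -/
def IsDS (s A : Finset P) : Prop := A ⊆ s ∧ ∀ x ∈ A, ∀ y ∈ s, y ≤ x → y ∈ A

/-- rank of a downset in the lexicographic order. -/
noncomputable def rnk (r : P → P → Prop) (s A : Finset P) : ℕ :=
  (s.powerset.filter (fun B => IsDS s B ∧ NN r B < NN r A)).card

lemma rnk_mono {s A A' : Finset P} (hAA : NN r A ≤ NN r A') : rnk r s A ≤ rnk r s A' := by
  apply card_le_card
  apply Finset.monotone_filter_right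
  rintro B - ⟨h1, h2⟩
  exact ⟨h1, lt_of_lt_of_le h2 hAA⟩

lemma rnk_lt {s A A' : Finset P} (hA : IsDS s A) (hAA : NN r A < NN r A') :
    rnk r s A < rnk r s A' := by
  apply card_lt_card
  constructor
  · apply Finset.monotone_filter_right
    rintro B - ⟨h1, h2⟩
    exact ⟨h1, lt_trans h2 hAA⟩
  · intro hsub
    have hmem : A ∈ s.powerset.filter (fun B => IsDS s B ∧ NN r B < NN r A') := by
      simp only [mem_filter, Finset.mem_powerset]
      exact ⟨hA.1, hA, hAA⟩
    have := hsub hmem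
    simp only [mem_filter] at this
    exact absurd this.2.2 (lt_irrefl _)

lemma rnk_lt_rev (hL : IsLinearOrder P r) {s A A' : Finset P} (hA' : IsDS s A')
    (hr : rnk r s A < rnk r s A') : NN r A < NN r A' := by
  rcases Nat.lt_or_ge (NN r A) (NN r A') with h | h
  · exact h
  · exact absurd (rnk_mono (s := s) h) (by omega)

section Realizer

variable {le1 le2 : P → P → Prop} (h : IsRealizer le1 le2)

include h

lemma real_le_iff {x y : P} : x ≤ y ↔ le1 x y ∧ le2 x y := h.2.2 x y

lemma real_f_of_le {x y : P} (hxy : x ≤ y) : idx le1 x ≤ idx le1 y :=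
  idx_le h.1 ((h.2.2 x y).1 hxy).1

lemma real_g_of_le {x y : P} (hxy : x ≤ y) : idx le2 x ≤ idx le2 y :=
  idx_le h.2.1 ((h.2.2 x y).1 hxy).2

lemma real_le_of_fg {x y : P} (hf : idx le1 x ≤ idx le1 y) (hg : idx le2 x ≤ idx le2 y) :
    x ≤ y := by
  rcases eq_or_ne x y with rfl | hne
  · exact le_refl x
  · have h1 : le1 x y := by
      rcases Nat.lt_or_ge (idx le1 x) (idx le1 y) with hh | hh
      · exact (idx_rev h.1 hh).1
      · exact absurd (idx_inj h.1 (Nat.le_antisymm hf hh)) hne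
    have h2 : le2 x y := by
      rcases Nat.lt_or_ge (idx le2 x) (idx le2 y) with hh | hh
      · exact (idx_rev h.2.1 hh).1
      · exact absurd (idx_inj h.2.1 (Nat.le_antisymm hg hh)) hne
    exact (h.2.2 x y).2 ⟨h1, h2⟩

/-- the "good downset" lemma for principal-type downsets `s.filter (· ≤ t)`,
when every element of `s` is strictly `le1`-below `t`. -/
lemma good_principal
    {s : Finset P} {t : P} (hts : ∀ x ∈ s, idx le1 x < idx le1 t)
    {B : Finset P} (hB : IsDS s B) (hns : ¬ s.filter (· ≤ t) ⊆ B) :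
    NN le1 B < NN le1 (s.filter (· ≤ t)) := by
  set D := s.filter (· ≤ t) with hD
  obtain ⟨u, huD, huB⟩ := Finset.not_subset.mp hns
  have hne : B ≠ D := by
    intro hEq; rw [hEq] at huB; exact huB huD
  obtain ⟨z, hz, hzmax⟩ := NN_key h.1 hne
  rcases hz with ⟨hzB, hzD, hlt⟩ | ⟨hzD, hzB, hlt⟩
  · -- z ∈ B \ D : contradiction
    exfalso
    have hzs : z ∈ s := hB.1 hzB
    have hzt : ¬ z ≤ t := by
      intro hle
      exact hzD (by simp [hD, hzs, hle])
    have hf1 : le1 z t ∧ z ≠ t := idx_rev h.1 (hts z hzs)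
    have h2 : le2 t z := by
      have hnle : ¬ le2 z t := fun hc => hzt ((h.2.2 z t).2 ⟨hf1.1, hc⟩)
      haveI := h.2.1
      rcases total_of le2 z t with hh | hh
      · exact absurd hh hnle
      · exact hh
    have hut : u ≤ t := by
      simp only [hD, mem_filter] at huD; exact huD.2
    have hus : u ∈ s := by
      simp only [hD, mem_filter] at huD; exact huD.1
    have hg_uz : idx le2 u ≤ idx le2 z := by
      have h2u : le2 u t := ((h.2.2 u t).1 hut).2
      haveI := h.2.1
      exact idx_le h.2.1 (_root_.trans_of le2 h2u h2)
    have hf_uz : idx le1 u ≤ idx le1 z := by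
      have := hzmax u (Or.inr ⟨huD, huB⟩)
      exact this
    have huz : u ≤ z := real_le_of_fg h hf_uz hg_uz
    exact huB (hB.2 z hzB u hus huz)
  · exact hlt

end Realizer

section Chains
open scoped Classical

variable {le1 le2 : P → P → Prop}

/-- predicate: `C` is a chain in the complementary order with maximum `y`. -/
def ChainAt (le1 le2 : P → P → Prop) (y : P) (C : Finset P) : Prop :=
  y ∈ C ∧ (∀ a ∈ C, le'' le1 le2 a y) ∧
    ∀ a ∈ C, ∀ b ∈ C, le'' le1 le2 a b ∨ le'' le1 le2 b a

noncomputable def wcnt (le1 le2 : P → P → Prop) (y : P) : ℕ :=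
  ((univ : Finset (Finset P)).filter (ChainAt le1 le2 y)).card

lemma chainCount_eq_wcnt (y : P) : chainCount le1 le2 y = wcnt le1 le2 y := by
  have hset : {C : Finset P | y ∈ C ∧ (∀ a ∈ C, le'' le1 le2 a y) ∧
      ∀ a ∈ C, ∀ b ∈ C, le'' le1 le2 a b ∨ le'' le1 le2 b a}
      = ↑((univ : Finset (Finset P)).filter (ChainAt le1 le2 y)) := by
    ext C
    simp [ChainAt]
  rw [chainCount, hset, Set.ncard_coe_finset, wcnt]

variable (h : IsRealizer le1 le2)
include h

lemma lepp_refl (x : P) : le'' le1 le2 x x := by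
  haveI := h.1; haveI := h.2.1
  exact ⟨_root_.refl_of le1 x, _root_.refl_of le2 x⟩

lemma lepp_trans {x y z : P} (hxy : le'' le1 le2 x y) (hyz : le'' le1 le2 y z) :
    le'' le1 le2 x z := by
  haveI := h.1; haveI := h.2.1
  exact ⟨_root_.trans_of le1 hxy.1 hyz.1, _root_.trans_of le2 hyz.2 hxy.2⟩

lemma lepp_antisymm {x y : P} (hxy : le'' le1 le2 x y) (hyx : le'' le1 le2 y x) : x = y := by
  haveI := h.1
  exact antisymm_of le1 hxy.1 hyx.1

lemma lepp_f_le {x y : P} (hxy : le'' le1 le2 x y) : idx le1 x ≤ idx le1 y :=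
  idx_le h.1 hxy.1

/-- The chain recurrence: chains with maximum `t` are obtained from the empty chain
or a chain with maximum some `a` strictly below `t`, by adding `t`. -/
lemma wcnt_rec (t : P) :
    wcnt le1 le2 t = 1 + ∑ a ∈ univ.filter (fun a => le'' le1 le2 a t ∧ a ≠ t),
      wcnt le1 le2 a := by
  classical
  set T2 : Finset (Finset P) := univ.filter (fun C =>
    (∀ a ∈ C, le'' le1 le2 a t ∧ a ≠ t) ∧
    ∀ a ∈ C, ∀ b ∈ C, le'' le1 le2 a b ∨ le'' le1 le2 b a) with hT2
  have hT2mem : ∀ C : Finset P, C ∈ T2 ↔ ((∀ a ∈ C, le'' le1 le2 a t ∧ a ≠ t) ∧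
      ∀ a ∈ C, ∀ b ∈ C, le'' le1 le2 a b ∨ le'' le1 le2 b a) := by
    intro C; rw [hT2]; simp only [mem_filter, mem_univ, true_and]
  have hChainAt : ∀ (y : P) (C : Finset P), C ∈ (univ : Finset (Finset P)).filter
      (ChainAt le1 le2 y) ↔ ChainAt le1 le2 y C := by
    intro y C; simp only [mem_filter, mem_univ, true_and]
  -- step 1 : bijection with T2 via erasing t
  have step1 : wcnt le1 le2 t = T2.card := by
    rw [wcnt]
    refine Finset.card_bij' (fun C _ => C.erase t) (fun C _ => insert t C) ?hi ?hj ?li ?ri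
    case hi =>
      intro C hC
      show C.erase t ∈ T2
      obtain ⟨htC, hbel, hch⟩ := (hChainAt t C).mp hC
      refine (hT2mem _).mpr ⟨?_, ?_⟩
      · intro a ha
        exact ⟨hbel a (Finset.mem_of_mem_erase ha), Finset.ne_of_mem_erase ha⟩
      · intro a ha b hb
        exact hch a (Finset.mem_of_mem_erase ha) b (Finset.mem_of_mem_erase hb)
    case hj =>
      intro C hC
      show insert t C ∈ _
      obtain ⟨hbel, hch⟩ := (hT2mem C).mp hC
      refine (hChainAt t _).mpr ⟨Finset.mem_insert_self t C, ?_, ?_⟩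
      · intro a ha
        rcases Finset.mem_insert.mp ha with h1 | h1
        · rw [h1]; exact lepp_refl h t
        · exact (hbel a h1).1
      · intro a ha b hb
        rcases Finset.mem_insert.mp ha with h1 | h1 <;>
          rcases Finset.mem_insert.mp hb with h2 | h2
        · rw [h1, h2]; exact Or.inl (lepp_refl h t)
        · rw [h1]; exact Or.inr (hbel b h2).1
        · rw [h2]; exact Or.inl (hbel a h1).1
        · exact hch a h1 b h2
    case li =>
      intro C hC
      exact Finset.insert_erase ((hChainAt t C).mp hC).1
    case ri =>
      intro C hC
      apply Finset.erase_insert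
      intro htC
      exact (((hT2mem C).mp hC).1 t htC).2 rfl
  -- step 2 : split off the empty chain
  have hempty : T2.filter (fun C => C = ∅) = {∅} := by
    ext C
    simp only [mem_filter, Finset.mem_singleton]
    constructor
    · rintro ⟨-, hC⟩; exact hC
    · rintro rfl
      refine ⟨(hT2mem ∅).mpr ⟨fun a ha => absurd ha (Finset.notMem_empty a),
        fun a ha => absurd ha (Finset.notMem_empty a)⟩, rfl⟩
  have hsplit : T2.card = 1 + (T2.filter (fun C => ¬ C = ∅)).card := by
    have := Finset.card_filter_add_card_filter_not (s := T2) (p := fun C => C = ∅)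
    rw [hempty] at this
    simp only [Finset.card_singleton] at this
    omega
  -- step 3 : fiberwise count of nonempty chains by their maximum
  set F : Finset P := univ.filter (fun a => le'' le1 le2 a t ∧ a ≠ t) with hF
  have hFmem : ∀ a : P, a ∈ F ↔ (le'' le1 le2 a t ∧ a ≠ t) := by
    intro a; rw [hF]; simp only [mem_filter, mem_univ, true_and]
  have step3 : (T2.filter (fun C => ¬ C = ∅)).card = ∑ a ∈ F, wcnt le1 le2 a := by
    have hmaxfun : ∀ C ∈ T2.filter (fun C => ¬ C = ∅), ∃ a, ChainAt le1 le2 a C ∧ a ∈ F := by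
      intro C hC
      obtain ⟨hCT2, hne⟩ := Finset.mem_filter.mp hC
      obtain ⟨hbelow, hchain⟩ := (hT2mem C).mp hCT2
      obtain ⟨a, haC, hamax⟩ := Finset.exists_max_image C (idx le1)
        (Finset.nonempty_iff_ne_empty.mpr hne)
      refine ⟨a, ⟨haC, ?_, hchain⟩, (hFmem a).mpr (hbelow a haC)⟩
      intro b hb
      rcases hchain b hb a haC with hba | hab
      · exact hba
      · have h1 : idx le1 a ≤ idx le1 b := lepp_f_le h hab
        have h2 : idx le1 b ≤ idx le1 a := hamax b hb
        have hab' : a = b := idx_inj h.1 (Nat.le_antisymm (by omega) (by omega))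
        subst hab'
        exact lepp_refl h a
    choose mx hmx using hmaxfun
    set mxf : Finset P → P := fun C =>
      if hC : C ∈ T2.filter (fun C => ¬ C = ∅) then mx C hC else t with hmxf
    have hfib : ∀ C ∈ T2.filter (fun C => ¬ C = ∅), mxf C ∈ F := by
      intro C hC
      simp only [hmxf, dif_pos hC]
      exact (hmx C hC).2
    rw [Finset.card_eq_sum_card_fiberwise hfib]
    apply Finset.sum_congr rfl
    intro a haF
    rw [wcnt]
    congr 1
    ext C
    constructor
    · intro hCmem
      obtain ⟨hCmem', hmxeq⟩ := Finset.mem_filter.mp hCmem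
      have : mx C hCmem' = a := by
        simp only [hmxf] at hmxeq; rw [dif_pos hCmem'] at hmxeq; exact hmxeq
      refine (hChainAt a C).mpr ?_
      rw [← this]
      exact (hmx C hCmem').1
    · intro hCmem
      have hCa : ChainAt le1 le2 a C := (hChainAt a C).mp hCmem
      obtain ⟨hat, hant⟩ := (hFmem a).mp haF
      obtain ⟨haC, hbelow, hchain⟩ := hCa
      have hCT2 : C ∈ T2 := by
        refine (hT2mem C).mpr ⟨?_, hchain⟩
        intro b hb
        have hba := hbelow b hb
        refine ⟨lepp_trans h hba hat, ?_⟩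
        rintro rfl
        exact hant (lepp_antisymm h hat hba)
      have hCne : ¬ C = ∅ := by
        intro hC0; rw [hC0] at haC; exact absurd haC (Finset.notMem_empty a)
      have hCmem' : C ∈ T2.filter (fun C => ¬ C = ∅) :=
        Finset.mem_filter.mpr ⟨hCT2, hCne⟩
      refine Finset.mem_filter.mpr ⟨hCmem', ?_⟩
      show mxf C = a
      simp only [hmxf, dif_pos hCmem']
      obtain ⟨⟨hmC, hmb, -⟩, -⟩ := hmx C hCmem'
      have h1 : idx le1 (mx C hCmem') ≤ idx le1 a := lepp_f_le h (hbelow _ hmC)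
      have h2 : idx le1 a ≤ idx le1 (mx C hCmem') := lepp_f_le h (hmb a haC)
      exact idx_inj h.1 (Nat.le_antisymm h1 h2)
  rw [step1, hsplit, step3, hF]

end Chains

section MainInduction
open scoped Classical

variable {le1 le2 : P → P → Prop}

lemma main_induction (h : IsRealizer le1 le2) :
    ∀ (n : ℕ) (s : Finset P), s.card ≤ n → (∀ x ∈ s, ∀ y : P, le1 y x → y ∈ s) →
    ∀ A : Finset P, IsDS s A → ∑ x ∈ A, chainCount le1 le2 x = rnk le1 s A := by
  intro n
  induction n with
  | zero =>
    intro s hcard hinit A hA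
    have hs : s = ∅ := Finset.card_eq_zero.mp (Nat.le_zero.mp hcard)
    have hA0 : A = ∅ := Finset.subset_empty.mp (hs ▸ hA.1)
    subst hA0
    rw [Finset.sum_empty, rnk]
    symm
    rw [Finset.card_eq_zero]
    apply Finset.filter_false_of_mem
    rintro B hB ⟨-, hlt⟩
    have : NN le1 (∅ : Finset P) = 0 := Finset.sum_empty
    omega
  | succ n IH =>
    intro s hcard hinit A hA
    by_cases hs : s = ∅
    · have hA0 : A = ∅ := Finset.subset_empty.mp (hs ▸ hA.1)
      subst hA0
      rw [Finset.sum_empty, rnk]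
      symm
      rw [Finset.card_eq_zero]
      apply Finset.filter_false_of_mem
      rintro B hB ⟨-, hlt⟩
      have : NN le1 (∅ : Finset P) = 0 := Finset.sum_empty
      omega
    obtain ⟨t, hts, htmax⟩ := Finset.exists_max_image s (idx le1)
      (Finset.nonempty_iff_ne_empty.mpr hs)
    set s' := s.erase t with hs'def
    have hcard' : s'.card ≤ n := by
      rw [hs'def, Finset.card_erase_of_mem hts]; omega
    have hmaxstrict : ∀ x ∈ s', idx le1 x < idx le1 t := by
      intro x hx
      have hxs : x ∈ s := Finset.mem_of_mem_erase hx
      have hne : x ≠ t := Finset.ne_of_mem_erase hx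
      have h1 := htmax x hxs
      rcases Nat.lt_or_ge (idx le1 x) (idx le1 t) with hh | hh
      · exact hh
      · exact absurd (idx_inj h.1 (Nat.le_antisymm h1 hh)) hne
    have hinit' : ∀ x ∈ s', ∀ y : P, le1 y x → y ∈ s' := by
      intro x hx y hyx
      have hys : y ∈ s := hinit x (Finset.mem_of_mem_erase hx) y hyx
      refine Finset.mem_erase.mpr ⟨?_, hys⟩
      rintro rfl
      exact absurd (idx_le h.1 hyx) (by have := hmaxstrict x hx; omega)
    have hagree : ∀ B : Finset P, B ⊆ s → ∀ y : P, idx le1 t < idx le1 y → y ∉ B := by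
      intro B hB y hy hmem
      exact absurd (htmax y (hB hmem)) (by omega)
    have hDSiff : ∀ B : Finset P, IsDS s' B ↔ (IsDS s B ∧ t ∉ B) := by
      intro B
      constructor
      · rintro ⟨hBsub, hBcl⟩
        have htB : t ∉ B := fun htB => (Finset.mem_erase.mp (hBsub htB)).1 rfl
        refine ⟨⟨fun x hx => Finset.mem_of_mem_erase (hBsub hx), ?_⟩, htB⟩
        intro x hx y hys hyx
        have hyne : y ≠ t := by
          rintro rfl
          have hxs' : x ∈ s' := hBsub hx
          have h1 : le1 y x := ((h.2.2 y x).1 hyx).1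
          exact absurd (idx_le h.1 h1) (by have := hmaxstrict x hxs'; omega)
        exact hBcl x hx y (Finset.mem_erase.mpr ⟨hyne, hys⟩) hyx
      · rintro ⟨⟨hBsub, hBcl⟩, htB⟩
        refine ⟨fun x hx => Finset.mem_erase.mpr ⟨fun hxt => htB (hxt ▸ hx), hBsub hx⟩, ?_⟩
        intro x hx y hys' hyx
        exact hBcl x hx y (Finset.mem_of_mem_erase hys') hyx
    set D := s'.filter (· ≤ t) with hD
    have hDDS : IsDS s' D := by
      constructor
      · exact Finset.filter_subset _ _
      · intro x hx y hy hyx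
        obtain ⟨hxs, hxt⟩ := Finset.mem_filter.mp hx
        exact Finset.mem_filter.mpr ⟨hy, le_trans hyx hxt⟩
    have hDsub : D ⊆ s' := Finset.filter_subset _ _
    have hFeq : univ.filter (fun a => le'' le1 le2 a t ∧ a ≠ t) = s' \ D := by
      ext a
      simp only [mem_filter, mem_univ, true_and, Finset.mem_sdiff]
      constructor
      · rintro ⟨⟨h1, h2⟩, hne⟩
        have has : a ∈ s := hinit t hts a h1
        have has' : a ∈ s' := Finset.mem_erase.mpr ⟨hne, has⟩
        refine ⟨has', ?_⟩
        intro hmem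
        obtain ⟨-, hat⟩ := Finset.mem_filter.mp hmem
        have h3 := ((h.2.2 a t).1 hat).2
        haveI := h.2.1
        exact hne (antisymm_of le2 h3 h2)
      · rintro ⟨has', hnmem⟩
        have hne : a ≠ t := (Finset.mem_erase.mp has').1
        have hat : ¬ a ≤ t := fun hle => hnmem (Finset.mem_filter.mpr ⟨has', hle⟩)
        have h1 : le1 a t := (idx_rev h.1 (hmaxstrict a has')).1
        have h2 : le2 t a := by
          have hnle : ¬ le2 a t := fun hc => hat ((h.2.2 a t).2 ⟨h1, hc⟩)
          haveI := h.2.1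
          rcases total_of le2 a t with hh | hh
          · exact absurd hh hnle
          · exact hh
        exact ⟨⟨h1, h2⟩, hne⟩
    have hwt : chainCount le1 le2 t = 1 + ∑ a ∈ s' \ D, chainCount le1 le2 a := by
      rw [chainCount_eq_wcnt, wcnt_rec h t]
      congr 1
      exact Finset.sum_congr hFeq (fun x _ => (chainCount_eq_wcnt x).symm)
    have IH' : ∀ B : Finset P, IsDS s' B →
        ∑ x ∈ B, chainCount le1 le2 x = rnk le1 s' B := IH s' hcard' hinit'
    have hrs' : IsDS s' s' := ⟨subset_rfl, fun x hx y hy hyx => hy⟩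
    set n' := (s'.powerset.filter (fun B => IsDS s' B)).card with hn'
    have hs'mem : s' ∈ s'.powerset.filter (fun B => IsDS s' B) :=
      Finset.mem_filter.mpr ⟨Finset.mem_powerset_self s', hrs'⟩
    have htop : rnk le1 s' s' + 1 = n' := by
      have heq : s'.powerset.filter (fun B => IsDS s' B ∧ NN le1 B < NN le1 s')
          = (s'.powerset.filter (fun B => IsDS s' B)).erase s' := by
        ext B
        simp only [mem_filter, Finset.mem_powerset, Finset.mem_erase]
        constructor
        · rintro ⟨h1, h2, h3⟩
          refine ⟨?_, h1, h2⟩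
          rintro rfl; exact lt_irrefl _ h3
        · rintro ⟨hne, h1, h2⟩
          refine ⟨h1, h2, ?_⟩
          have hle : NN le1 B ≤ NN le1 s' := NN_mono h1
          have hnn := NN_ne h.1 hne
          omega
      have hpos : 0 < n' := by
        rw [hn']; exact Finset.card_pos.mpr ⟨s', hs'mem⟩
      rw [rnk, heq, Finset.card_erase_of_mem hs'mem]
      omega
    by_cases htA : t ∈ A
    case neg =>
      -- t ∉ A : reduce to s'
      have hA' : IsDS s' A := (hDSiff A).mpr ⟨hA, htA⟩
      rw [IH' A hA']
      have heq : s'.powerset.filter (fun B => IsDS s' B ∧ NN le1 B < NN le1 A)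
          = s.powerset.filter (fun B => IsDS s B ∧ NN le1 B < NN le1 A) := by
        ext B
        simp only [mem_filter, Finset.mem_powerset]
        constructor
        · rintro ⟨h1, h2, h3⟩
          have := (hDSiff B).mp h2
          exact ⟨this.1.1, this.1, h3⟩
        · rintro ⟨h1, h2, h3⟩
          have htB : t ∉ B := by
            intro htB
            have hbig : NN le1 A < NN le1 B := by
              apply NN_bridge h.1 htB htA
              intro y hy
              exact iff_of_false (hagree A hA.1 y hy) (hagree B h1 y hy)
            omega
          have hB' : IsDS s' B := (hDSiff B).mpr ⟨h2, htB⟩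
          exact ⟨hB'.1, hB', h3⟩
      rw [rnk, rnk, heq]
    case pos =>
      -- t ∈ A
      set A' := A.erase t with hA'def
      have hD_sub_A' : D ⊆ A' := by
        intro y hy
        obtain ⟨hys', hyt⟩ := Finset.mem_filter.mp hy
        have hyA : y ∈ A := hA.2 t htA y (Finset.mem_of_mem_erase hys') hyt
        exact Finset.mem_erase.mpr ⟨(Finset.mem_erase.mp hys').1, hyA⟩
      have hA'DS : IsDS s' A' := by
        constructor
        · intro x hx
          obtain ⟨hxt, hxA⟩ := Finset.mem_erase.mp hx
          exact Finset.mem_erase.mpr ⟨hxt, hA.1 hxA⟩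
        · intro x hx y hys' hyx
          obtain ⟨hxt, hxA⟩ := Finset.mem_erase.mp hx
          have hyA : y ∈ A := hA.2 x hxA y (Finset.mem_of_mem_erase hys') hyx
          exact Finset.mem_erase.mpr ⟨(Finset.mem_erase.mp hys').1, hyA⟩
      have hNNA : NN le1 A' + 2 ^ (idx le1 t) = NN le1 A :=
        Finset.sum_erase_add A _ htA
      -- split the rank of A in s
      set Q := s.powerset.filter (fun B => IsDS s B ∧ NN le1 B < NN le1 A) with hQ
      set Qt := Q.filter (fun B => t ∈ B) with hQt
      set Qn := Q.filter (fun B => ¬ t ∈ B) with hQn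
      have hQsplit : rnk le1 s A = Qt.card + Qn.card := by
        rw [rnk, ← hQ, ← Finset.card_filter_add_card_filter_not
          (s := Q) (p := fun B => t ∈ B), ← hQt, ← hQn]
      have hQncard : Qn.card = n' := by
        rw [hQn, hn']
        congr 1
        ext B
        simp only [hQ, mem_filter, Finset.mem_powerset]
        constructor
        · rintro ⟨⟨h1, h2, h3⟩, h4⟩
          have hB' : IsDS s' B := (hDSiff B).mpr ⟨h2, h4⟩
          exact ⟨hB'.1, hB'⟩
        · rintro ⟨h1, h2⟩
          have hBs := (hDSiff B).mp h2
          refine ⟨⟨hBs.1.1, hBs.1, ?_⟩, hBs.2⟩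
          apply NN_bridge h.1 htA hBs.2
          intro y hy
          exact iff_of_false (hagree B hBs.1.1 y hy) (hagree A hA.1 y hy)
      -- Qt is in bijection with downsets of s' between D and A'
      set R' := s'.powerset.filter
        (fun B' => (IsDS s' B' ∧ NN le1 B' < NN le1 A') ∧ D ⊆ B') with hR'
      have hQtcard : Qt.card = R'.card := by
        refine Finset.card_bij' (fun B _ => B.erase t) (fun B' _ => insert t B')
          ?hi ?hj ?li ?ri
        case hi =>
          intro B hB
          show B.erase t ∈ R'
          obtain ⟨hBQ, htB⟩ := Finset.mem_filter.mp hB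
          obtain ⟨hBsub', hBDS, hBNN⟩ := Finset.mem_filter.mp hBQ
          have hBsub : B ⊆ s := Finset.mem_powerset.mp hBsub'
          have hBDS' : IsDS s' (B.erase t) := by
            constructor
            · intro x hx
              obtain ⟨hxt, hxB⟩ := Finset.mem_erase.mp hx
              exact Finset.mem_erase.mpr ⟨hxt, hBsub hxB⟩
            · intro x hx y hys' hyx
              obtain ⟨hxt, hxB⟩ := Finset.mem_erase.mp hx
              have hyB : y ∈ B := hBDS.2 x hxB y (Finset.mem_of_mem_erase hys') hyx
              exact Finset.mem_erase.mpr ⟨(Finset.mem_erase.mp hys').1, hyB⟩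
          have hDB : D ⊆ B.erase t := by
            intro y hy
            obtain ⟨hys', hyt⟩ := Finset.mem_filter.mp hy
            have hyB : y ∈ B := hBDS.2 t htB y (Finset.mem_of_mem_erase hys') hyt
            exact Finset.mem_erase.mpr ⟨(Finset.mem_erase.mp hys').1, hyB⟩
          have hNNB : NN le1 (B.erase t) + 2 ^ (idx le1 t) = NN le1 B :=
            Finset.sum_erase_add B _ htB
          refine Finset.mem_filter.mpr ⟨Finset.mem_powerset.mpr hBDS'.1, ⟨hBDS', ?_⟩, hDB⟩
          omega
        case hj =>
          intro B' hB'
          show insert t B' ∈ Qt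
          obtain ⟨hBsub', ⟨hBDS', hBNN⟩, hDB⟩ := Finset.mem_filter.mp hB'
          have hBsub : B' ⊆ s' := Finset.mem_powerset.mp hBsub'
          have htB' : t ∉ B' := fun hc => (Finset.mem_erase.mp (hBsub hc)).1 rfl
          have hBDS : IsDS s (insert t B') := by
            constructor
            · intro x hx
              rcases Finset.mem_insert.mp hx with h1 | h1
              · rw [h1]; exact hts
              · exact Finset.mem_of_mem_erase (hBsub h1)
            · intro x hx y hys hyx
              rcases Finset.mem_insert.mp hx with h1 | h1
              · rw [h1] at hyx
                by_cases hyt : y = t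
                · rw [hyt]; exact Finset.mem_insert_self t B'
                · have hys' : y ∈ s' := Finset.mem_erase.mpr ⟨hyt, hys⟩
                  have hyD : y ∈ D := Finset.mem_filter.mpr ⟨hys', hyx⟩
                  exact Finset.mem_insert_of_mem (hDB hyD)
              · have hyt : y ≠ t := by
                  rintro rfl
                  have h1' : le1 y x := ((h.2.2 y x).1 hyx).1
                  exact absurd (idx_le h.1 h1') (by have := hmaxstrict x (hBsub h1); omega)
                have hys' : y ∈ s' := Finset.mem_erase.mpr ⟨hyt, hys⟩
                exact Finset.mem_insert_of_mem (hBDS'.2 x h1 y hys' hyx)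
          have hNNB : NN le1 (insert t B') = 2 ^ (idx le1 t) + NN le1 B' :=
            Finset.sum_insert htB'
          refine Finset.mem_filter.mpr ⟨Finset.mem_filter.mpr
            ⟨Finset.mem_powerset.mpr hBDS.1, hBDS, ?_⟩, Finset.mem_insert_self t B'⟩
          omega
        case li =>
          intro B hB
          exact Finset.insert_erase (Finset.mem_filter.mp hB).2
        case ri =>
          intro B' hB'
          apply Finset.erase_insert
          obtain ⟨hBsub', -, -⟩ := Finset.mem_filter.mp hB'
          have hBsub : B' ⊆ s' := Finset.mem_powerset.mp hBsub'
          exact fun hc => (Finset.mem_erase.mp (hBsub hc)).1 rfl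
        -- relation between R' and ranks in s'
      have hR'rnk : rnk le1 s' A' = R'.card + rnk le1 s' D := by
        set QA' := s'.powerset.filter (fun B' => IsDS s' B' ∧ NN le1 B' < NN le1 A')
          with hQA'
        have hsplit2 : QA'.card = (QA'.filter (fun B' => D ⊆ B')).card
            + (QA'.filter (fun B' => ¬ D ⊆ B')).card :=
          (Finset.card_filter_add_card_filter_not
            (s := QA') (p := fun B' => D ⊆ B')).symm
        have he1 : QA'.filter (fun B' => D ⊆ B') = R' := by
          ext B'
          simp only [hQA', hR', mem_filter, Finset.mem_powerset]
          tauto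
        have he2 : QA'.filter (fun B' => ¬ D ⊆ B')
            = s'.powerset.filter (fun B' => IsDS s' B' ∧ NN le1 B' < NN le1 D) := by
          ext B'
          simp only [hQA', mem_filter, Finset.mem_powerset]
          constructor
          · rintro ⟨⟨h1, h2, h3⟩, h4⟩
            refine ⟨h1, h2, ?_⟩
            have := good_principal h hmaxstrict h2 (by rw [← hD]; exact h4)
            rw [← hD] at this
            exact this
          · rintro ⟨h1, h2, h3⟩
            have hnsub : ¬ D ⊆ B' := by
              intro hsub
              exact absurd (NN_mono (r := le1) hsub) (by omega)
            have hDA : NN le1 D ≤ NN le1 A' := NN_mono hD_sub_A'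
            exact ⟨⟨h1, h2, by omega⟩, hnsub⟩
        rw [rnk, ← hQA', hsplit2, he1, he2, rnk]
      -- assemble everything
      have e1 : ∑ x ∈ A', chainCount le1 le2 x + chainCount le1 le2 t
          = ∑ x ∈ A, chainCount le1 le2 x := Finset.sum_erase_add A _ htA
      have e3 : ∑ x ∈ s' \ D, chainCount le1 le2 x + ∑ x ∈ D, chainCount le1 le2 x
          = ∑ x ∈ s', chainCount le1 le2 x := Finset.sum_sdiff hDsub
      have e4 : ∑ x ∈ A', chainCount le1 le2 x = rnk le1 s' A' := IH' A' hA'DS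
      have e5 : ∑ x ∈ D, chainCount le1 le2 x = rnk le1 s' D := IH' D hDDS
      have e6 : ∑ x ∈ s', chainCount le1 le2 x = rnk le1 s' s' := IH' s' hrs'
      omega

end MainInduction

end AuxDev


section Assembly
set_option linter.unusedSectionVars false
set_option linter.unusedVariables false
open scoped Classical

variable {le1 le2 : P → P → Prop}

lemma isDS_univ_iff (A : Finset P) : IsDS univ A ↔ IsLowerSet (↑A : Set P) := by
  constructor
  · rintro ⟨-, hcl⟩ a b hba ha
    simp only [Finset.mem_coe] at *
    exact hcl a ha b (mem_univ b) hba
  · intro hl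
    refine ⟨subset_univ A, fun x hx y _ hyx => ?_⟩
    have := hl hyx (by simpa using hx)
    simpa using this

/-- the rank of a downset. -/
noncomputable def Rk (le1 : P → P → Prop) (A : DownSet P) : ℕ := rnk le1 univ A.1

lemma ds_le_iff (A B : DownSet P) : A ≤ B ↔ A.1 ⊆ B.1 := Iff.rfl

lemma mem_pd {x y : P} : y ∈ (pd x).1 ↔ y ≤ x := by
  simp [pd]

lemma vval_eq_Rk (h : IsRealizer le1 le2) (A : DownSet P) :
    vval (chainCount le1 le2) A = Rk le1 A :=
  main_induction h (Fintype.card P) univ (by simp) (fun x _ y _ => mem_univ y) A.1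
    ((isDS_univ_iff A.1).mpr A.2)

lemma Rk_lt_of_NN (h : IsRealizer le1 le2) {A B : DownSet P} (hAB : NN le1 A.1 < NN le1 B.1) :
    Rk le1 A < Rk le1 B :=
  rnk_lt ((isDS_univ_iff A.1).mpr A.2) hAB

lemma NN_lt_of_Rk (h : IsRealizer le1 le2) {A B : DownSet P} (hAB : Rk le1 A < Rk le1 B) :
    NN le1 A.1 < NN le1 B.1 := by
  rcases Nat.lt_or_ge (NN le1 A.1) (NN le1 B.1) with hh | hh
  · exact hh
  · exact absurd (rnk_mono (s := univ) hh) (by unfold Rk at hAB; omega)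

lemma Rk_mono (h : IsRealizer le1 le2) {A B : DownSet P} (hAB : A.1 ⊆ B.1) :
    Rk le1 A ≤ Rk le1 B := rnk_mono (NN_mono hAB)

lemma Rk_inj (h : IsRealizer le1 le2) {A B : DownSet P} (hAB : Rk le1 A = Rk le1 B) :
    A = B := by
  by_contra hne
  have hne' : A.1 ≠ B.1 := fun hc => hne (Subtype.ext hc)
  have := NN_ne h.1 hne'
  rcases Nat.lt_or_ge (NN le1 A.1) (NN le1 B.1) with hh | hh
  · exact absurd (Rk_lt_of_NN h hh) (by omega)
  · exact absurd (Rk_lt_of_NN h (show NN le1 B.1 < NN le1 A.1 by omega)) (by omega)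

lemma card_downsets : (univ.powerset.filter (fun B : Finset P => IsDS univ B)).card
    = Fintype.card (DownSet P) := by
  symm
  have e : DownSet P ≃ {A : Finset P // IsLowerSet (↑A : Set P)} := Equiv.refl _
  rw [Fintype.card_congr e]
  apply Fintype.card_of_subtype
  intro x
  simp only [mem_filter, Finset.mem_powerset, subset_univ, true_and]
  exact isDS_univ_iff x

lemma Rk_lt_card (h : IsRealizer le1 le2) (A : DownSet P) :
    Rk le1 A < Fintype.card (DownSet P) := by
  rw [← card_downsets]
  have hAmem : A.1 ∈ univ.powerset.filter (fun B : Finset P => IsDS univ B) :=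
    Finset.mem_filter.mpr ⟨Finset.mem_powerset.mpr (subset_univ _),
      (isDS_univ_iff A.1).mpr A.2⟩
  have hsub : univ.powerset.filter (fun B => IsDS univ B ∧ NN le1 B < NN le1 A.1)
      ⊆ (univ.powerset.filter (fun B : Finset P => IsDS univ B)).erase A.1 := by
    intro B hB
    obtain ⟨h1, h2, h3⟩ := Finset.mem_filter.mp hB
    refine Finset.mem_erase.mpr ⟨?_, Finset.mem_filter.mpr ⟨h1, h2⟩⟩
    rintro rfl; exact lt_irrefl _ h3
  have h1 := Finset.card_le_card hsub
  have h2 := Finset.card_erase_of_mem hAmem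
  have h3 : 0 < (univ.powerset.filter (fun B : Finset P => IsDS univ B)).card :=
    Finset.card_pos.mpr ⟨A.1, hAmem⟩
  unfold Rk rnk
  omega

lemma Rk_surj (h : IsRealizer le1 le2) {k : ℕ} (hk : k < Fintype.card (DownSet P)) :
    ∃ A : DownSet P, Rk le1 A = k := by
  have himg : (univ : Finset (DownSet P)).image (Rk le1) = Finset.range
      (Fintype.card (DownSet P)) := by
    apply Finset.eq_of_subset_of_card_le
    · intro i hi
      obtain ⟨A, -, rfl⟩ := Finset.mem_image.mp hi
      exact Finset.mem_range.mpr (Rk_lt_card h A)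
    · rw [Finset.card_range,
        Finset.card_image_of_injective _ (fun A B hAB => Rk_inj h hAB), Finset.card_univ]
  have : k ∈ (univ : Finset (DownSet P)).image (Rk le1) := by
    rw [himg]; exact Finset.mem_range.mpr hk
  obtain ⟨A, -, hA⟩ := Finset.mem_image.mp this
  exact ⟨A, hA⟩

/-- key comparison via the le2-minimum of the symmetric difference, for downsets. -/
lemma NN_key2 (h : IsRealizer le1 le2) {A B : Finset P} (hA : IsDS univ A) (hB : IsDS univ B)
    (hne : A ≠ B) :
    ∃ z, ((z ∈ A ∧ z ∉ B ∧ NN le1 B < NN le1 A) ∨ (z ∈ B ∧ z ∉ A ∧ NN le1 A < NN le1 B)) ∧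
      ∀ y, ((y ∈ A ∧ y ∉ B) ∨ (y ∈ B ∧ y ∉ A)) → idx le2 z ≤ idx le2 y := by
  set Δ := (A \ B) ∪ (B \ A) with hΔ
  have hΔne : Δ.Nonempty := by
    rw [Finset.nonempty_iff_ne_empty]
    intro hemp
    apply hne
    ext x
    constructor
    · intro hx
      by_contra hxB
      have : x ∈ Δ := by simp [hΔ, hx, hxB]
      rw [hemp] at this; exact absurd this (Finset.notMem_empty x)
    · intro hx
      by_contra hxA
      have : x ∈ Δ := by simp [hΔ, hx, hxA]
      rw [hemp] at this; exact absurd this (Finset.notMem_empty x)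
  obtain ⟨z, hzΔ, hzmin⟩ := Finset.exists_min_image Δ (idx le2) hΔne
  have hmin' : ∀ y, ((y ∈ A ∧ y ∉ B) ∨ (y ∈ B ∧ y ∉ A)) → idx le2 z ≤ idx le2 y := by
    intro y hy
    apply hzmin
    rcases hy with ⟨h1, h2⟩ | ⟨h1, h2⟩ <;> simp [hΔ, h1, h2]
  obtain ⟨z1, hz1, hmax1⟩ := NN_key h.1 hne
  have hzmem : (z ∈ A ∧ z ∉ B) ∨ (z ∈ B ∧ z ∉ A) := by
    simp only [hΔ, Finset.mem_union, Finset.mem_sdiff] at hzΔ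
    tauto
  rcases hz1 with ⟨h1A, h1B, hlt⟩ | ⟨h1B, h1A, hlt⟩
  · -- NN B < NN A, z1 ∈ A \ B; we claim z ∈ A \ B
    refine ⟨z, Or.inl ⟨?_, ?_, hlt⟩, hmin'⟩
    all_goals {
      rcases hzmem with ⟨hz1', hz2'⟩ | ⟨hz1', hz2'⟩
      · first | exact hz1' | exact hz2'
      · -- z ∈ B \ A : contradiction
        exfalso
        have hne' : z ≠ z1 := by rintro rfl; exact hz2' h1A
        have hg : idx le2 z < idx le2 z1 := by
          have h1 := hzmin z1 (by simp [hΔ, h1A, h1B])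
          rcases Nat.lt_or_ge (idx le2 z) (idx le2 z1) with hh | hh
          · exact hh
          · exact absurd (idx_inj h.2.1 (Nat.le_antisymm h1 hh)) hne'
        have hf : idx le1 z < idx le1 z1 := by
          have h1 := hmax1 z (Or.inr ⟨hz1', hz2'⟩)
          rcases Nat.lt_or_ge (idx le1 z) (idx le1 z1) with hh | hh
          · exact hh
          · exact absurd (idx_inj h.1 (Nat.le_antisymm h1 hh)) hne'
        have hle : z ≤ z1 := real_le_of_fg h (le_of_lt hf) (le_of_lt hg)
        exact hz2' (hA.2 z1 h1A z (mem_univ z) hle) }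
  · refine ⟨z, Or.inr ⟨?_, ?_, hlt⟩, hmin'⟩
    all_goals {
      rcases hzmem with ⟨hz1', hz2'⟩ | ⟨hz1', hz2'⟩
      · -- z ∈ A \ B : contradiction
        exfalso
        have hne' : z ≠ z1 := by rintro rfl; exact hz2' h1B
        have hg : idx le2 z < idx le2 z1 := by
          have h1 := hzmin z1 (by simp [hΔ, h1B, h1A])
          rcases Nat.lt_or_ge (idx le2 z) (idx le2 z1) with hh | hh
          · exact hh
          · exact absurd (idx_inj h.2.1 (Nat.le_antisymm h1 hh)) hne'
        have hf : idx le1 z < idx le1 z1 := by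
          have h1 := hmax1 z (Or.inl ⟨hz1', hz2'⟩)
          rcases Nat.lt_or_ge (idx le1 z) (idx le1 z1) with hh | hh
          · exact hh
          · exact absurd (idx_inj h.1 (Nat.le_antisymm h1 hh)) hne'
        have hle : z ≤ z1 := real_le_of_fg h (le_of_lt hf) (le_of_lt hg)
        exact hz2' (hB.2 z1 h1B z (mem_univ z) hle)
      · first | exact hz1' | exact hz2' }

/-- complement-of-upset downset. -/
def Mup (x : P) : DownSet P :=
  ⟨univ.filter (fun y => ¬ x ≤ y), by
    intro a b hba ha
    simp only [coe_filter, Set.mem_setOf_eq, mem_univ, true_and] at *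
    exact fun hxb => ha (hxb.trans hba)⟩

lemma mem_Mup {x y : P} : y ∈ (Mup x).1 ↔ ¬ x ≤ y := by
  simp [Mup]

/-- The join-closure part. -/
lemma initial_part (h : IsRealizer le1 le2) (T : Set (DownSet P))
    (hT : Initial (vval (chainCount le1 le2)) T) :
    Initial (vval (chainCount le1 le2)) (joinSet T) := by
  have hvR : vval (chainCount le1 le2) = Rk le1 := funext (vval_eq_Rk h)
  rw [hvR] at hT ⊢
  obtain ⟨j, hj⟩ := hT
  by_cases hT0 : T = ∅
  · refine ⟨0, ?_⟩
    have hjoin : joinSet T = ∅ := by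
      rw [hT0]
      ext C
      simp only [joinSet, Set.mem_setOf_eq, Set.mem_empty_iff_false, iff_false]
      rintro ⟨S, hS, hSne, rfl⟩
      obtain ⟨B, hB⟩ := hSne
      exact absurd (hS hB) (Set.notMem_empty B)
    rw [hjoin]
    ext k
    simp
  · -- T nonempty
    have hjpos : 0 < j := by
      obtain ⟨A, hAT⟩ := Set.nonempty_iff_ne_empty.mpr hT0
      have : Rk le1 A ∈ {k | k < j} := hj ▸ Set.mem_image_of_mem _ hAT
      simp only [Set.mem_setOf_eq] at this
      omega
    have hTlt : ∀ A ∈ T, Rk le1 A < j := by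
      intro A hAT
      have : Rk le1 A ∈ {k | k < j} := hj ▸ Set.mem_image_of_mem _ hAT
      simpa using this
    have hTeq : ∀ A : DownSet P, A ∈ T ↔ Rk le1 A < j := by
      intro A
      refine ⟨hTlt A, ?_⟩
      intro hA
      have : Rk le1 A ∈ {k | k < j} := by simpa using hA
      rw [← hj] at this
      obtain ⟨A', hA'T, hA'⟩ := this
      exact (Rk_inj h hA') ▸ hA'T
    -- the union of T
    set U : DownSet P := ⟨univ.filter (fun x => rnk le1 univ (pd x).1 < j), by
      intro a b hba ha
      simp only [coe_filter, Set.mem_setOf_eq, mem_univ, true_and] at *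
      have hsub : (pd b).1 ⊆ (pd a).1 := by
        intro y hy
        rw [mem_pd] at *
        exact hy.trans hba
      exact lt_of_le_of_lt (rnk_mono (NN_mono hsub)) ha⟩ with hU
    have hmemU : ∀ x : P, x ∈ U.1 ↔ Rk le1 (pd x) < j := by
      intro x
      rw [hU]
      simp only [mem_filter, mem_univ, true_and]
      rfl
    -- any element of T is contained in U
    have hTU : ∀ B : DownSet P, B ∈ T → B.1 ⊆ U.1 := by
      intro B hBT x hxB
      rw [hmemU]
      have hsub : (pd x).1 ⊆ B.1 := by
        intro y hy
        rw [mem_pd] at hy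
        exact B.2 hy hxB
      exact lt_of_le_of_lt (Rk_mono h hsub) (hTlt B hBT)
    -- the good lemma for U
    have hgood : ∀ C : DownSet P, ¬ C.1 ⊆ U.1 → NN le1 U.1 < NN le1 C.1 := by
      intro C hns
      obtain ⟨u, huC, huU⟩ := Finset.not_subset.mp hns
      have hune : U.1 ≠ C.1 := fun hEq => huU (hEq ▸ huC)
      obtain ⟨z, hz, hzmax⟩ := NN_key h.1 hune
      rcases hz with ⟨hzU, hzC, hlt⟩ | ⟨hzC, hzU, hlt⟩
      · -- z ∈ U \ C : contradiction
        exfalso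
        have hruj : ¬ Rk le1 (pd u) < j := by rwa [← hmemU]
        have hrzj : Rk le1 (pd z) < j := by rwa [hmemU] at hzU
        have hNNzu : NN le1 (pd z).1 < NN le1 (pd u).1 :=
          NN_lt_of_Rk h (by omega)
        have hpne : (pd z).1 ≠ (pd u).1 := fun hc => by rw [hc] at hNNzu; omega
        obtain ⟨m, hm, hmmax⟩ := NN_key h.1 hpne
        rcases hm with ⟨hm1, hm2, hlt2⟩ | ⟨hm1, hm2, hlt2⟩
        · omega
        · -- m ∈ pd u \ pd z, with maximal idx le1 in the difference
          have hfmu : idx le1 m ≤ idx le1 u := idx_le h.1 ((h.2.2 m u).1 (mem_pd.mp hm1)).1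
          have hfu : idx le1 u < idx le1 z := by
            have h1 := hzmax u (Or.inr ⟨huC, huU⟩)
            have hne2 : u ≠ z := fun hc => hzC (hc ▸ huC)
            rcases Nat.lt_or_ge (idx le1 u) (idx le1 z) with hh | hh
            · exact hh
            · exact absurd (idx_inj h.1 (Nat.le_antisymm h1 hh)) hne2
          have hzpd : z ∈ (pd z).1 := mem_pd.mpr le_rfl
          have hznpdu : z ∉ (pd u).1 := by
            rw [mem_pd]
            intro hzu
            exact hzC (C.2 hzu huC)
          have := hmmax z (Or.inl ⟨hzpd, hznpdu⟩)
          omega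
      · exact hlt
    -- joinSet T = everything of rank at most Rk U
    have hUT : ∀ C : DownSet P, C.1 ⊆ U.1 → C ∈ joinSet T := by
      intro C hCU
      have hbotT : (⊥ : DownSet P) ∈ T := by
        rw [hTeq]
        have : Rk le1 (⊥ : DownSet P) = 0 := by
          unfold Rk rnk
          rw [Finset.card_eq_zero]
          apply Finset.filter_false_of_mem
          rintro B hB ⟨-, hltB⟩
          have hbot : (⊥ : DownSet P).1 = (∅ : Finset P) := rfl
          rw [hbot] at hltB
          have : NN le1 (∅ : Finset P) = 0 := Finset.sum_empty
          omega
        omega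
      refine ⟨insert ⊥ (C.1.image pd), ?_, ⟨⊥, Finset.mem_insert_self _ _⟩, ?_⟩
      · intro B hB
        simp only [Finset.coe_insert, Set.mem_insert_iff, Finset.coe_image,
          Set.mem_image, Finset.mem_coe] at hB
        rcases hB with rfl | ⟨x, hx, rfl⟩
        · exact hbotT
        · rw [hTeq]
          rw [← hmemU]
          exact hCU hx
      · apply le_antisymm
        · rw [ds_le_iff]
          intro x hxC
          have hpdx : pd x ∈ insert ⊥ (C.1.image pd) :=
            Finset.mem_insert_of_mem (Finset.mem_image_of_mem pd hxC)
          have hle : pd x ≤ (insert ⊥ (C.1.image pd)).sup'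
              ⟨⊥, Finset.mem_insert_self _ _⟩ id := Finset.le_sup' id hpdx
          exact (ds_le_iff _ _).mp hle (mem_pd.mpr le_rfl)
        · apply Finset.sup'_le
          intro B hB
          simp only [Finset.mem_insert, Finset.mem_image] at hB
          rcases hB with rfl | ⟨x, hx, rfl⟩
          · exact bot_le
          · rw [id, ds_le_iff]
            intro y hy
            exact C.2 (mem_pd.mp hy) hx
    have hjoin : joinSet T = {C | Rk le1 C ≤ Rk le1 U} := by
      ext C
      simp only [Set.mem_setOf_eq]
      constructor
      · rintro ⟨S, hST, hSne, rfl⟩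
        apply Rk_mono h
        apply (ds_le_iff _ _).mp
        apply Finset.sup'_le
        intro B hB
        exact (ds_le_iff _ _).mpr (hTU B (hST hB))
      · intro hRC
        apply hUT
        by_contra hns
        have := hgood C hns
        exact absurd (Rk_lt_of_NN h this) (by omega)
    refine ⟨Rk le1 U + 1, ?_⟩
    rw [hjoin]
    ext k
    simp only [Set.mem_image, Set.mem_setOf_eq]
    constructor
    · rintro ⟨C, hC, rfl⟩
      omega
    · intro hk
      have hkcard : k < Fintype.card (DownSet P) := by
        have := Rk_lt_card h U
        omega
      obtain ⟨A, hA⟩ := Rk_surj h hkcard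
      exact ⟨A, by omega, hA⟩

/-- The meet-closure part. -/
lemma final_part (h : IsRealizer le1 le2) (T : Set (DownSet P))
    (hT : Final (vval (chainCount le1 le2)) T) :
    Final (vval (chainCount le1 le2)) (meetSet T) := by
  have hvR : vval (chainCount le1 le2) = Rk le1 := funext (vval_eq_Rk h)
  rw [hvR] at hT ⊢
  obtain ⟨j, hj⟩ := hT
  by_cases hT0 : T = ∅
  · refine ⟨Fintype.card (DownSet P), ?_⟩
    have hmeet : meetSet T = ∅ := by
      rw [hT0]
      ext C
      simp only [meetSet, Set.mem_setOf_eq, Set.mem_empty_iff_false, iff_false]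
      rintro ⟨S, hS, hSne, rfl⟩
      obtain ⟨B, hB⟩ := hSne
      exact absurd (hS hB) (Set.notMem_empty B)
    rw [hmeet]
    ext k
    simp only [Set.image_empty, Set.mem_empty_iff_false, Set.mem_setOf_eq, false_iff]
    omega
  · have hTge : ∀ A ∈ T, j ≤ Rk le1 A := by
      intro A hAT
      have : Rk le1 A ∈ {k | j ≤ k ∧ k < Fintype.card (DownSet P)} :=
        hj ▸ Set.mem_image_of_mem _ hAT
      exact this.1
    have hTeq : ∀ A : DownSet P, A ∈ T ↔ j ≤ Rk le1 A := by
      intro A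
      refine ⟨hTge A, ?_⟩
      intro hA
      have : Rk le1 A ∈ {k | j ≤ k ∧ k < Fintype.card (DownSet P)} :=
        ⟨hA, Rk_lt_card h A⟩
      rw [← hj] at this
      obtain ⟨A', hA'T, hA'⟩ := this
      exact (Rk_inj h hA') ▸ hA'T
    -- the intersection of T
    set W : DownSet P := ⟨univ.filter (fun x => rnk le1 univ (Mup x).1 < j), by
      intro a b hba ha
      simp only [coe_filter, Set.mem_setOf_eq, mem_univ, true_and] at *
      have hsub : (Mup b).1 ⊆ (Mup a).1 := by
        intro y hy
        rw [mem_Mup] at *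
        exact fun hc => hy (hba.trans hc)
      exact lt_of_le_of_lt (rnk_mono (NN_mono hsub)) ha⟩ with hW
    have hmemW : ∀ x : P, x ∈ W.1 ↔ Rk le1 (Mup x) < j := by
      intro x
      rw [hW]
      simp only [mem_filter, mem_univ, true_and]
      rfl
    -- W is contained in any element of T
    have hWT : ∀ B : DownSet P, B ∈ T → W.1 ⊆ B.1 := by
      intro B hBT x hxW
      by_contra hxB
      have hsub : B.1 ⊆ (Mup x).1 := by
        intro y hy
        rw [mem_Mup]
        intro hxy
        exact hxB (B.2 hxy hy)
      have h1 : Rk le1 B ≤ Rk le1 (Mup x) := Rk_mono h hsub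
      have h2 : j ≤ Rk le1 B := hTge B hBT
      have h3 : Rk le1 (Mup x) < j := (hmemW x).mp hxW
      omega
    -- the good lemma for W
    have hdsW : IsDS univ W.1 := (isDS_univ_iff W.1).mpr W.2
    have hgood : ∀ C : DownSet P, ¬ W.1 ⊆ C.1 → NN le1 C.1 < NN le1 W.1 := by
      intro C hns
      obtain ⟨u, huW, huC⟩ := Finset.not_subset.mp hns
      have hune : C.1 ≠ W.1 := fun hEq => huC (hEq ▸ huW)
      obtain ⟨z, hz, hzmin⟩ := NN_key2 h ((isDS_univ_iff C.1).mpr C.2) hdsW hune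
      rcases hz with ⟨hzC, hzW, hlt⟩ | ⟨hzW, hzC, hlt⟩
      · -- z ∈ C \ W : contradiction
        exfalso
        have hrzj : ¬ Rk le1 (Mup z) < j := by rwa [← hmemW]
        have hruj : Rk le1 (Mup u) < j := by rwa [hmemW] at huW
        have hNNuz : NN le1 (Mup u).1 < NN le1 (Mup z).1 :=
          NN_lt_of_Rk h (by omega)
        have hpne : (Mup u).1 ≠ (Mup z).1 := fun hc => by rw [hc] at hNNuz; omega
        obtain ⟨m, hm, hmmin⟩ := NN_key2 h ((isDS_univ_iff (Mup u).1).mpr (Mup u).2)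
          ((isDS_univ_iff (Mup z).1).mpr (Mup z).2) hpne
        rcases hm with ⟨hm1, hm2, hlt2⟩ | ⟨hm1, hm2, hlt2⟩
        · omega
        · -- m ∈ Mup z \ Mup u, with minimal idx le2 in the difference
          have hum : u ≤ m := by
            by_contra hc
            exact hm2 (mem_Mup.mpr hc)
          have hgum : idx le2 u ≤ idx le2 m := idx_le h.2.1 ((h.2.2 u m).1 hum).2
          have hzMu : z ∈ (Mup u).1 := by
            rw [mem_Mup]
            intro huz
            exact huC (C.2 huz hzC)
          have hzMz : z ∉ (Mup z).1 := by
            rw [mem_Mup]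
            exact not_not_intro le_rfl
          have hmz : idx le2 m ≤ idx le2 z := hmmin z (Or.inl ⟨hzMu, hzMz⟩)
          have hzu : idx le2 z < idx le2 u := by
            have h1 := hzmin u (Or.inr ⟨huW, huC⟩)
            have hne2 : z ≠ u := fun hc => huC (hc ▸ hzC)
            rcases Nat.lt_or_ge (idx le2 z) (idx le2 u) with hh | hh
            · exact hh
            · exact absurd (idx_inj h.2.1 (Nat.le_antisymm h1 hh)) hne2
          omega
      · exact hlt
    -- the top downset
    have hDtopls : IsLowerSet (↑(univ : Finset P) : Set P) := by
      rw [Finset.coe_univ]; exact isLowerSet_univ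
    set Dtop : DownSet P := ⟨univ, hDtopls⟩ with hDtop
    have hDtopT : Dtop ∈ T := by
      rw [hTeq]
      obtain ⟨A, hAT⟩ := Set.nonempty_iff_ne_empty.mpr hT0
      have h1 : j ≤ Rk le1 A := hTge A hAT
      have h2 : Rk le1 A ≤ Rk le1 Dtop := Rk_mono h (by intro y _; exact mem_univ y)
      omega
    -- everything containing W is a meet of elements of T
    have hWC : ∀ C : DownSet P, W.1 ⊆ C.1 → C ∈ meetSet T := by
      intro C hWCsub
      refine ⟨insert Dtop ((univ \ C.1).image Mup), ?_,
        ⟨Dtop, Finset.mem_insert_self _ _⟩, ?_⟩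
      · intro B hB
        simp only [Finset.coe_insert, Set.mem_insert_iff, Finset.coe_image,
          Set.mem_image, Finset.mem_coe] at hB
        rcases hB with rfl | ⟨x, hx, rfl⟩
        · exact hDtopT
        · rw [hTeq]
          obtain ⟨-, hxC⟩ := Finset.mem_sdiff.mp hx
          have hxW : x ∉ W.1 := fun hc => hxC (hWCsub hc)
          rw [hmemW] at hxW
          omega
      · apply le_antisymm
        · apply Finset.le_inf'
          intro B hB
          simp only [Finset.mem_insert, Finset.mem_image] at hB
          rcases hB with rfl | ⟨x, hx, rfl⟩
          · rw [id, ds_le_iff]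
            intro y _
            exact mem_univ y
          · rw [id, ds_le_iff]
            intro y hy
            rw [mem_Mup]
            intro hxy
            obtain ⟨-, hxC⟩ := Finset.mem_sdiff.mp hx
            exact hxC (C.2 hxy hy)
        · rw [ds_le_iff]
          intro y hy
          by_contra hyC
          have hMy : Mup y ∈ insert Dtop ((univ \ C.1).image Mup) :=
            Finset.mem_insert_of_mem (Finset.mem_image_of_mem Mup
              (Finset.mem_sdiff.mpr ⟨mem_univ y, hyC⟩))
          have hle : (insert Dtop ((univ \ C.1).image Mup)).inf'
              ⟨Dtop, Finset.mem_insert_self _ _⟩ id ≤ Mup y := Finset.inf'_le id hMy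
          have := (ds_le_iff _ _).mp hle hy
          rw [mem_Mup] at this
          exact this le_rfl
    have hmeet : meetSet T = {C | Rk le1 W ≤ Rk le1 C} := by
      ext C
      simp only [Set.mem_setOf_eq]
      constructor
      · rintro ⟨S, hST, hSne, rfl⟩
        apply Rk_mono h
        apply (ds_le_iff _ _).mp
        apply Finset.le_inf'
        intro B hB
        exact (ds_le_iff _ _).mpr (hWT B (hST hB))
      · intro hRC
        apply hWC
        by_contra hns
        have := hgood C hns
        exact absurd (Rk_lt_of_NN h this) (by omega)
    refine ⟨Rk le1 W, ?_⟩
    rw [hmeet]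
    ext k
    simp only [Set.mem_image, Set.mem_setOf_eq]
    constructor
    · rintro ⟨C, hC, rfl⟩
      exact ⟨hC, Rk_lt_card h C⟩
    · rintro ⟨hk1, hk2⟩
      obtain ⟨A, hA⟩ := Rk_surj h hk2
      exact ⟨A, by omega, hA⟩

end Assembly

/-- The chain-counting valuation associated to a realizer is complete: join-closures of
initial segments are initial segments and meet-closures of final segments are final. -/
theorem stmt12 (le1 le2 : P → P → Prop) (h : IsRealizer le1 le2) :
    (∀ T, Initial (vval (chainCount le1 le2)) T →
      Initial (vval (chainCount le1 le2)) (joinSet T)) ∧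
    (∀ T, Final (vval (chainCount le1 le2)) T →
      Final (vval (chainCount le1 le2)) (meetSet T)) := by
  exact ⟨initial_part h, final_part h⟩
end

section
/- Let P be a finite poset with realizer {Λ₁, Λ₂}, Q the complementary poset, w the chain-counting weight, and v the associated valuation on the downset lattice L. For any downset A with v(A) = i < |L| - 1, let B be the complementary upset, which is a chain in Q; let y be its ≤'-minimum. Then the set A' = (A ∪ {y}) \ {x : x <' y} is a downset of P and v(A') = i + 1. -/
open Finset

variable (P : Type*) [PartialOrder P] [Fintype P] [DecidableEq P]

variable {P}

variable [DecidableRel ((· ≤ ·) : P → P → Prop)]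

instance {le1 le2 : P → P → Prop} [DecidableRel le1] [DecidableRel le2] :
    DecidableRel (le'' le1 le2) := fun x y =>
  inferInstanceAs (Decidable (le1 x y ∧ le2 y x))

section Helpers

lemma exists_max_rel {r : P → P → Prop} (hrefl : ∀ a, r a a)
    (htrans : ∀ {a b c}, r a b → r b c → r a c)
    (S : Finset P) (hS : S.Nonempty)
    (htot : ∀ a ∈ S, ∀ b ∈ S, r a b ∨ r b a) :
    ∃ m ∈ S, ∀ a ∈ S, r a m := by
  classical
  induction S using Finset.induction_on with
  | empty => exact absurd hS (by simp)
  | @insert a S ha ih =>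
    by_cases hSne : S.Nonempty
    · obtain ⟨m, hm, hmax⟩ := ih hSne
        (fun x hx z hz => htot x (mem_insert_of_mem hx) z (mem_insert_of_mem hz))
      rcases htot a (mem_insert_self a S) m (mem_insert_of_mem hm) with h1 | h1
      · exact ⟨m, mem_insert_of_mem hm, fun x hx => by
          rcases mem_insert.1 hx with rfl | hx
          · exact h1
          · exact hmax x hx⟩
      · exact ⟨a, mem_insert_self a S, fun x hx => by
          rcases mem_insert.1 hx with rfl | hx
          · exact hrefl x
          · exact htrans (hmax x hx) h1⟩
    · rw [not_nonempty_iff_eq_empty] at hSne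
      subst hSne
      exact ⟨a, mem_insert_self a _, fun x hx => by
        rcases mem_insert.1 hx with rfl | hx
        · exact hrefl x
        · simp at hx⟩

lemma key_count {r : P → P → Prop} [DecidableRel r]
    (hrefl : ∀ a, r a a) (htrans : ∀ {a b c}, r a b → r b c → r a c)
    (hanti : ∀ {a b}, r a b → r b a → a = b) (y : P) :
    (univ.filter (fun C : Finset P => y ∈ C ∧ (∀ a ∈ C, r a y) ∧
      ∀ a ∈ C, ∀ b ∈ C, r a b ∨ r b a)).card
    = 1 + ∑ x ∈ univ.filter (fun x => r x y ∧ x ≠ y),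
        (univ.filter (fun C : Finset P => x ∈ C ∧ (∀ a ∈ C, r a x) ∧
          ∀ a ∈ C, ∀ b ∈ C, r a b ∨ r b a)).card := by
  classical
  set D := univ.filter (fun x => r x y ∧ x ≠ y) with hD
  have hyD : y ∉ D := by simp [hD]
  have stepA : (univ.filter (fun C : Finset P => y ∈ C ∧ (∀ a ∈ C, r a y) ∧
      ∀ a ∈ C, ∀ b ∈ C, r a b ∨ r b a)).card
      = (univ.filter (fun C : Finset P => C ⊆ D ∧
          ∀ a ∈ C, ∀ b ∈ C, r a b ∨ r b a)).card := by
    apply Finset.card_bij (fun C _ => C.erase y)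
    · intro C hC
      simp only [mem_filter, mem_univ, true_and] at hC ⊢
      obtain ⟨hyC, hall, hpc⟩ := hC
      constructor
      · intro a haC
        obtain ⟨hay, haC2⟩ := mem_erase.1 haC
        simp [hD, hall a haC2, hay]
      · intro a haC b hbC
        exact hpc a (mem_of_mem_erase haC) b (mem_of_mem_erase hbC)
    · intro C1 h1 C2 h2 heq
      simp only [mem_filter, mem_univ, true_and] at h1 h2
      have e1 : insert y (C1.erase y) = C1 := insert_erase h1.1
      have e2 : insert y (C2.erase y) = C2 := insert_erase h2.1
      rw [← e1, ← e2, heq]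
    · intro C hC
      simp only [mem_filter, mem_univ, true_and] at hC
      obtain ⟨hsub, hpc⟩ := hC
      have hyC : y ∉ C := fun hyC => hyD (hsub hyC)
      refine ⟨insert y C, ?_, ?_⟩
      · simp only [mem_filter, mem_univ, true_and]
        refine ⟨mem_insert_self y C, ?_, ?_⟩
        · intro a haI
          rcases mem_insert.1 haI with rfl | haC
          · exact hrefl _
          · exact ((mem_filter.1 (hsub haC)).2).1
        · intro a haI b hbI
          rcases mem_insert.1 haI with rfl | haC
          · rcases mem_insert.1 hbI with rfl | hbC
            · exact Or.inl (hrefl _)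
            · exact Or.inr ((mem_filter.1 (hsub hbC)).2).1
          · rcases mem_insert.1 hbI with rfl | hbC
            · exact Or.inl ((mem_filter.1 (hsub haC)).2).1
            · exact hpc a haC b hbC
      · rw [erase_insert hyC]
  have stepC : univ.filter (fun C : Finset P => C ⊆ D ∧
        (∀ a ∈ C, ∀ b ∈ C, r a b ∨ r b a))
      = insert (∅ : Finset P) (D.biUnion (fun x =>
          univ.filter (fun C : Finset P => x ∈ C ∧ (∀ a ∈ C, r a x) ∧
            ∀ a ∈ C, ∀ b ∈ C, r a b ∨ r b a))) := by
    ext C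
    simp only [mem_filter, mem_univ, true_and, mem_insert, mem_biUnion]
    constructor
    · rintro ⟨hsub, hpc⟩
      rcases eq_or_ne C ∅ with rfl | hne
      · exact Or.inl rfl
      · right
        obtain ⟨m, hm, hmax⟩ := exists_max_rel hrefl @htrans C (nonempty_iff_ne_empty.2 hne) hpc
        exact ⟨m, hsub hm, hm, hmax, hpc⟩
    · rintro (rfl | ⟨x, hxD, hxC, hall, hpc⟩)
      · simp
      · refine ⟨?_, hpc⟩
        intro a haC
        have hax := hall a haC
        have hxy : r x y := ((mem_filter.1 hxD).2).1
        have hxny : x ≠ y := ((mem_filter.1 hxD).2).2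
        simp only [hD, mem_filter, mem_univ, true_and]
        refine ⟨htrans hax hxy, ?_⟩
        rintro rfl
        exact hxny (hanti hxy hax)
  have hnotmem : (∅ : Finset P) ∉ D.biUnion (fun x =>
      univ.filter (fun C : Finset P => x ∈ C ∧ (∀ a ∈ C, r a x) ∧
        ∀ a ∈ C, ∀ b ∈ C, r a b ∨ r b a)) := by
    simp
  have hdisj : ∀ x ∈ D, ∀ x' ∈ D, x ≠ x' → Disjoint
      (univ.filter (fun C : Finset P => x ∈ C ∧ (∀ a ∈ C, r a x) ∧
        ∀ a ∈ C, ∀ b ∈ C, r a b ∨ r b a))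
      (univ.filter (fun C : Finset P => x' ∈ C ∧ (∀ a ∈ C, r a x') ∧
        ∀ a ∈ C, ∀ b ∈ C, r a b ∨ r b a)) := by
    intro x hx x' hx' hne
    rw [Finset.disjoint_left]
    intro C hC hC'
    simp only [mem_filter, mem_univ, true_and] at hC hC'
    exact hne (hanti (hC'.2.1 x hC.1) (hC.2.1 x' hC'.1))
  rw [stepA, stepC, card_insert_of_notMem hnotmem, Finset.card_biUnion hdisj]
  omega

lemma chainCount_eq (le1 le2 : P → P → Prop) [DecidableRel le1] [DecidableRel le2] (y : P) :
    chainCount le1 le2 y = (univ.filter (fun C : Finset P => y ∈ C ∧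
      (∀ a ∈ C, le'' le1 le2 a y) ∧
      ∀ a ∈ C, ∀ b ∈ C, le'' le1 le2 a b ∨ le'' le1 le2 b a)).card := by
  rw [chainCount, ← Set.ncard_coe_finset]
  congr 1
  ext C
  simp

end Helpers

/-- Inductive step: if `A` is a downset with `v(A) < |L| - 1` and `y` is the
`≤'`-minimum of the complementary upset, then `A' = (A ∪ {y}) \ {x : x <' y}` is a
downset with `v(A') = v(A) + 1`. -/
theorem stmt15 (le1 le2 : P → P → Prop) [DecidableRel le1] [DecidableRel le2]
    (h : IsRealizer le1 le2) (A : DownSet P)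
    (hA : vval (chainCount le1 le2) A < Fintype.card (DownSet P) - 1)
    (y : P) (hy : y ∉ A.1) (hmin : ∀ z, z ∉ A.1 → le'' le1 le2 y z) :
    IsLowerSet
      (↑((insert y A.1) \ univ.filter (fun x => le'' le1 le2 x y ∧ x ≠ y)) : Set P) ∧
    ∑ x ∈ (insert y A.1) \ univ.filter (fun x => le'' le1 le2 x y ∧ x ≠ y),
        chainCount le1 le2 x = vval (chainCount le1 le2) A + 1 := by
  classical
  obtain ⟨h1, h2, hle⟩ := h
  have refl1 : ∀ a, le1 a a := fun a => h1.toIsPartialOrder.toIsPreorder.toRefl.refl a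
  have refl2 : ∀ a, le2 a a := fun a => h2.toIsPartialOrder.toIsPreorder.toRefl.refl a
  have trans1 : ∀ {a b c}, le1 a b → le1 b c → le1 a c :=
    fun hab hbc => h1.toIsPartialOrder.toIsPreorder.toIsTrans.trans _ _ _ hab hbc
  have trans2 : ∀ {a b c}, le2 a b → le2 b c → le2 a c :=
    fun hab hbc => h2.toIsPartialOrder.toIsPreorder.toIsTrans.trans _ _ _ hab hbc
  have anti1 : ∀ {a b}, le1 a b → le1 b a → a = b :=
    fun hab hba => h1.toIsPartialOrder.toAntisymm.antisymm _ _ hab hba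
  have anti2 : ∀ {a b}, le2 a b → le2 b a → a = b :=
    fun hab hba => h2.toIsPartialOrder.toAntisymm.antisymm _ _ hab hba
  have total1 : ∀ a b, le1 a b ∨ le1 b a := h1.toTotal.total
  have rrefl : ∀ a, le'' le1 le2 a a := fun a => ⟨refl1 a, refl2 a⟩
  have rtrans : ∀ {a b c}, le'' le1 le2 a b → le'' le1 le2 b c → le'' le1 le2 a c :=
    fun hab hbc => ⟨trans1 hab.1 hbc.1, trans2 hbc.2 hab.2⟩
  have ranti : ∀ {a b}, le'' le1 le2 a b → le'' le1 le2 b a → a = b :=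
    fun hab hba => anti1 hab.1 hba.1
  set D := univ.filter (fun x => le'' le1 le2 x y ∧ x ≠ y) with hDdef
  have hDA : D ⊆ A.1 := by
    intro x hx
    obtain ⟨hxy, hxny⟩ := (mem_filter.1 hx).2
    by_contra hxA
    exact hxny (ranti hxy (hmin x hxA))
  have hyD : y ∉ D := by simp [hDdef]
  have hyAD : y ∉ A.1 \ D := fun hmem => hy (mem_sdiff.1 hmem).1
  constructor
  · intro u v hvu huS
    simp only [Finset.mem_coe, mem_sdiff, mem_insert] at huS ⊢
    obtain ⟨huI, hnuD⟩ := huS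
    obtain ⟨l1vu, l2vu⟩ := (hle v u).1 hvu
    rcases huI with rfl | huA
    · -- u = y
      rcases eq_or_ne v u with rfl | hvny
      · exact ⟨Or.inl rfl, hyD⟩
      · have hvA : v ∈ A.1 := by
          by_contra hvA
          obtain ⟨l1yv, _⟩ := hmin v hvA
          exact hvny (anti1 l1vu l1yv)
        refine ⟨Or.inr hvA, fun hc => ?_⟩
        obtain ⟨⟨_, l2uv⟩, _⟩ := (mem_filter.1 hc).2
        exact hvny (anti2 l2vu l2uv)
    · have hany : u ≠ y := fun heq => hy (heq ▸ huA)
      have hvA : v ∈ A.1 := A.2 hvu huA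
      refine ⟨Or.inr hvA, fun hc => ?_⟩
      obtain ⟨⟨l1vy, l2yv⟩, hvny⟩ := (mem_filter.1 hc).2
      have l2yu : le2 y u := trans2 l2yv l2vu
      have hnruy : ¬ le'' le1 le2 u y := fun hr =>
        hnuD (mem_filter.2 ⟨mem_univ u, hr, hany⟩)
      have l1yu : le1 y u := by
        rcases total1 u y with h' | h'
        · exact absurd ⟨h', l2yu⟩ hnruy
        · exact h'
      exact hy (A.2 ((hle y u).2 ⟨l1yu, l2yu⟩) huA)
  · have hw : chainCount le1 le2 y = 1 + ∑ x ∈ D, chainCount le1 le2 x := by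
      rw [chainCount_eq le1 le2 y, key_count rrefl @rtrans @ranti y]
      exact congrArg (1 + ·) (Finset.sum_congr rfl fun x _ => (chainCount_eq le1 le2 x).symm)
    have hsd : (insert y A.1) \ D = insert y (A.1 \ D) := by
      ext a
      simp only [mem_sdiff, mem_insert]
      constructor
      · rintro ⟨rfl | haA, haD⟩
        · exact Or.inl rfl
        · exact Or.inr ⟨haA, haD⟩
      · rintro (rfl | ⟨haA, haD⟩)
        · exact ⟨Or.inl rfl, hyD⟩
        · exact ⟨Or.inr haA, haD⟩
    have hsplit : ∑ x ∈ A.1 \ D, chainCount le1 le2 x + ∑ x ∈ D, chainCount le1 le2 x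
        = ∑ x ∈ A.1, chainCount le1 le2 x := Finset.sum_sdiff hDA
    rw [hsd, Finset.sum_insert hyAD]
    simp only [vval]
    omega
end

section
/- Let P be a finite poset with realizer {Λ₁, Λ₂}. Then the number of downsets of P equals one plus the number of nonempty chains in the complementary poset Q (x ≤' y iff x ≤_{Λ₁} y and y ≤_{Λ₂} x, or x = y). -/
open Finset

variable (P : Type*) [PartialOrder P] [Fintype P] [DecidableEq P]

variable {P}

variable [DecidableRel ((· ≤ ·) : P → P → Prop)]

/-- Maximal elements of a downset. -/
def maxOf (A : DownSet P) : Finset P := A.1.filter (fun x => ∀ y ∈ A.1, x ≤ y → x = y)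

lemma exists_le_maxOf (A : DownSet P) {x : P} (hx : x ∈ A.1) : ∃ m ∈ maxOf A, x ≤ m := by
  obtain ⟨m, hm, hmax⟩ :=
    Finset.exists_maximal (s := A.1.filter (fun y => x ≤ y)) ⟨x, by simp [hx]⟩
  simp only [Finset.mem_filter] at hm
  refine ⟨m, Finset.mem_filter.2 ⟨hm.1, ?_⟩, hm.2⟩
  intro y hy hmy
  by_contra hne
  exact hne (le_antisymm hmy (hmax (Finset.mem_filter.2 ⟨hy, hm.2.trans hmy⟩) hmy))

lemma mem_iff_le_maxOf (A : DownSet P) {x : P} : x ∈ A.1 ↔ ∃ m ∈ maxOf A, x ≤ m := by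
  constructor
  · exact exists_le_maxOf A
  · rintro ⟨m, hm, hxm⟩
    exact A.2 hxm (Finset.mem_filter.1 hm).1

lemma maxOf_antichain (A : DownSet P) :
    ∀ a ∈ maxOf A, ∀ b ∈ maxOf A, a ≤ b → a = b := by
  intro a ha b hb hab
  simp only [maxOf, Finset.mem_filter] at ha hb
  exact ha.2 b hb.1 hab

lemma maxOf_down (C : Finset P) (hC : ∀ a ∈ C, ∀ b ∈ C, a ≤ b → a = b) :
    maxOf (⟨univ.filter (fun x => ∃ c ∈ C, x ≤ c), by
      intro a b hba ha
      simp only [coe_filter, Set.mem_setOf_eq, mem_univ, true_and] at *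
      obtain ⟨c, hc, hac⟩ := ha
      exact ⟨c, hc, hba.trans hac⟩⟩ : DownSet P) = C := by
  ext m
  simp only [maxOf, Finset.mem_filter, Finset.mem_univ, true_and]
  constructor
  · rintro ⟨⟨c, hc, hmc⟩, hmax⟩
    have hm : m = c := hmax c ⟨c, hc, le_rfl⟩ hmc
    rwa [hm]
  · intro hm
    refine ⟨⟨m, hm, le_rfl⟩, ?_⟩
    intro y hy hmy
    obtain ⟨c, hc, hyc⟩ := hy
    have hmc := hC m hm c hc (hmy.trans hyc)
    subst hmc
    exact le_antisymm hmy hyc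

/-- The number of downsets of `P` equals one plus the number of nonempty chains in
the complementary poset `Q`. -/
theorem stmt17 (le1 le2 : P → P → Prop) (h : IsRealizer le1 le2) :
    Fintype.card (DownSet P) =
      1 + Set.ncard {C : Finset P | C.Nonempty ∧
        ∀ a ∈ C, ∀ b ∈ C, le'' le1 le2 a b ∨ le'' le1 le2 b a} := by
  obtain ⟨h1, h2, hle⟩ := h
  have htot1 : ∀ a b : P, le1 a b ∨ le1 b a := h1.total
  have htot2 : ∀ a b : P, le2 a b ∨ le2 b a := h2.total
  have hanti1 : ∀ a b : P, le1 a b → le1 b a → a = b := fun a b => h1.antisymm a b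
  have hanti2 : ∀ a b : P, le2 a b → le2 b a → a = b := fun a b => h2.antisymm a b
  have hca : ∀ C : Finset P,
      (∀ a ∈ C, ∀ b ∈ C, le'' le1 le2 a b ∨ le'' le1 le2 b a) ↔
      (∀ a ∈ C, ∀ b ∈ C, a ≤ b → a = b) := by
    intro C
    constructor
    · intro hch a ha b hb hab
      rw [hle] at hab
      rcases hch a ha b hb with ⟨_, h21⟩ | ⟨h1ba, _⟩
      · exact hanti2 a b hab.2 h21
      · exact hanti1 a b hab.1 h1ba
    · intro hac a ha b hb
      rcases htot1 a b with hab1 | hba1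
      · rcases htot2 b a with hba2 | hab2
        · exact Or.inl ⟨hab1, hba2⟩
        · have : a = b := hac a ha b hb (by rw [hle]; exact ⟨hab1, hab2⟩)
          cases this
          exact Or.inl ⟨h1.refl _, h2.refl _⟩
      · rcases htot2 a b with hab2 | hba2
        · exact Or.inr ⟨hba1, hab2⟩
        · have : b = a := hac b hb a ha (by rw [hle]; exact ⟨hba1, hba2⟩)
          cases this
          exact Or.inl ⟨h1.refl _, h2.refl _⟩
  set S : Set (Finset P) := {C | ∀ a ∈ C, ∀ b ∈ C, a ≤ b → a = b} with hS
  have hbij : Set.BijOn (fun A : DownSet P => maxOf A) Set.univ S := by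
    refine ⟨fun A _ => maxOf_antichain A, ?_, ?_⟩
    · intro A _ B _ hAB
      apply Subtype.ext
      ext x
      rw [mem_iff_le_maxOf A, mem_iff_le_maxOf B,
        show maxOf A = maxOf B from hAB]
    · intro C hC
      exact ⟨_, Set.mem_univ _, maxOf_down C hC⟩
  have hcard : Fintype.card (DownSet P) = S.ncard := by
    rw [← hbij.image_eq, Set.ncard_image_of_injOn hbij.injOn, Set.ncard_univ,
      Nat.card_eq_fintype_card]
  have hST : S = insert ∅ {C : Finset P | C.Nonempty ∧
      ∀ a ∈ C, ∀ b ∈ C, le'' le1 le2 a b ∨ le'' le1 le2 b a} := by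
    ext C
    simp only [Set.mem_insert_iff, Set.mem_setOf_eq, hS]
    constructor
    · intro hC
      rcases C.eq_empty_or_nonempty with rfl | hne
      · exact Or.inl rfl
      · exact Or.inr ⟨hne, (hca C).2 hC⟩
    · rintro (rfl | ⟨_, hch⟩)
      · simp
      · exact (hca C).1 hch
  rw [hcard, hST, Set.ncard_insert_of_notMem (fun hmem => by
    simpa using hmem.1) (Set.toFinite _), add_comm]
end
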